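/- arXiv:1011.3619 — 4 statements merged into one kernel-verified Lean document; each statement's English description precedes it below -/
import Mathlib

section
/- In the factorization semigroup S(G,O), if s ∈ S(G,O) satisfies α(s) = 1 (the identity of G) and the group G_s generated by the factors of s is all of G, then ρ(g)(s) = s for every g ∈ G; that is, s is fixed under the conjugation action of G. -/
/-- `O` is invariant under conjugation. -/
def ConjInvariant {G : Type*} [Group G] (O : Set G) : Prop :=
  ∀ g a : G, a ∈ O → g * a * g⁻¹ ∈ O

/-- The elementary (Hurwitz) relation `x_{g₁} x_{g₂} ~ x_{g₁ g₂ g₁⁻¹} x_{g₁}`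
on words in the alphabet `{x_g : g ∈ O}`.  Together with symmetry and
transitivity it also yields `x_{g₁} x_{g₂} ~ x_{g₂} x_{g₂⁻¹ g₁ g₂}`. -/
def factorRel {G : Type*} [Group G] (O : Set G) :
    FreeMonoid O → FreeMonoid O → Prop := fun w w' =>
  ∃ (g₁ g₂ : O) (h : (g₁ : G) * g₂ * (g₁ : G)⁻¹ ∈ O),
    w = FreeMonoid.of g₁ * FreeMonoid.of g₂ ∧
    w' = FreeMonoid.of (⟨(g₁ : G) * g₂ * (g₁ : G)⁻¹, h⟩ : O) * FreeMonoid.of g₁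

/-- The congruence generated by the Hurwitz relations. -/
def factorCon {G : Type*} [Group G] (O : Set G) : Con (FreeMonoid O) :=
  conGen (factorRel O)

/-- The factorization semigroup `S(G,O)` of the equipped group `(G,O)`. -/
abbrev FactorSgp {G : Type*} [Group G] (O : Set G) := (factorCon O).Quotient

/-- The generator `x_g` of `S(G,O)`, for `g ∈ O`. -/
def xg {G : Type*} [Group G] (O : Set G) (g : O) : FactorSgp O :=
  (factorCon O).mk' (FreeMonoid.of g)

/-- If `α(s) = 1` and the factors of `s` generate all of `G`, then `s` is fixed
under the conjugation action of `G`. -/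
theorem fixed_of_product_one_full_monodromy {G : Type*} [Group G] (O : Set G)
    (hO : ConjInvariant O)
    (α : FactorSgp O →* G) (hα : ∀ g : O, α (xg O g) = g)
    (ρ : G →* MulAut (FactorSgp O))
    (hρ : ∀ (g : G) (a : O),
      ρ g (xg O a) = xg O ⟨g * a * g⁻¹, hO g a a.2⟩)
    (w : FreeMonoid O)
    (h1 : α ((factorCon O).mk' w) = 1)
    (hgen : Subgroup.closure {g : G | ∃ a ∈ FreeMonoid.toList w, (a : G) = g} = ⊤) :
    ∀ g : G, ρ g ((factorCon O).mk' w) = (factorCon O).mk' w := by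
  set mk := (factorCon O).mk' with hmk
  -- Hurwitz relation in the quotient
  have hur : ∀ a b : O, xg O a * xg O b =
      xg O ⟨(a : G) * b * (a : G)⁻¹, hO a b b.2⟩ * xg O a := by
    intro a b
    show mk _ * mk _ = mk _ * mk _
    rw [← map_mul, ← map_mul]
    exact (Con.eq _).2 (ConGen.Rel.of _ _ ⟨a, b, hO a b b.2, rfl, rfl⟩)
  -- moving a generator past any element
  have single : ∀ (a : O) (u : FactorSgp O), xg O a * u = ρ (a : G) u * xg O a := by
    intro a u
    obtain ⟨v, rfl⟩ := Con.mk'_surjective u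
    induction v using FreeMonoid.recOn with
    | one => simp
    | of_mul x v ih =>
        have hx : mk (FreeMonoid.of x * v) = xg O x * mk v := by
          rw [map_mul]; rfl
        rw [hx, ← mul_assoc, hur a x, mul_assoc, ih, ← mul_assoc, ← hρ, ← map_mul]
  -- general commutation: u * v = ρ (α u) v * u
  have comm : ∀ u v : FactorSgp O, u * v = ρ (α u) v * u := by
    intro u v
    obtain ⟨wu, rfl⟩ := Con.mk'_surjective u
    induction wu using FreeMonoid.recOn with
    | one => simp
    | of_mul x wu ih =>
        have hx : mk (FreeMonoid.of x * wu) = xg O x * mk wu := by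
          rw [map_mul]; rfl
        rw [hx, mul_assoc, ih, single x, map_mul (ρ (x : G)), mul_assoc,
          ← single x ((factorCon O).mk' wu)]
        congr 1
        rw [map_mul, hα, map_mul, MulAut.mul_apply]
  -- α of a conjugate
  have alphaconj : ∀ (g : G) (u : FactorSgp O), α (ρ g u) = g * α u * g⁻¹ := by
    intro g u
    obtain ⟨v, rfl⟩ := Con.mk'_surjective u
    induction v using FreeMonoid.recOn with
    | one => simp
    | of_mul x v ih =>
        have hx : mk (FreeMonoid.of x * v) = xg O x * mk v := by
          rw [map_mul]; rfl
        rw [hx, map_mul, map_mul, hρ, hα, ih, map_mul, hα]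
        group
        rfl
  -- ρ fixes s for every factor a of w
  have key : ∀ a : O, a ∈ FreeMonoid.toList w → ρ (a : G) (mk w) = mk w := by
    intro a ha
    obtain ⟨l₁, l₂, hl⟩ := List.append_of_mem ha
    have hw : w = FreeMonoid.ofList l₁ * FreeMonoid.of a * FreeMonoid.ofList l₂ := by
      have h := congrArg FreeMonoid.ofList hl
      rw [FreeMonoid.ofList_toList] at h
      rw [h, show a :: l₂ = [a] ++ l₂ from rfl, FreeMonoid.ofList_append,
        FreeMonoid.ofList_append, ← mul_assoc]
      rfl
    have hs : mk w = mk (FreeMonoid.ofList l₁) * xg O a * mk (FreeMonoid.ofList l₂) := by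
      rw [hw, map_mul, map_mul]; rfl
    set t : FactorSgp O :=
      ρ (a : G)⁻¹ (mk (FreeMonoid.ofList l₁)) * mk (FreeMonoid.ofList l₂) with ht
    have hst : mk w = xg O a * t := by
      rw [ht, ← mul_assoc, single a, ← MulAut.mul_apply, ← map_mul,
        mul_inv_cancel, map_one, MulAut.one_apply, hs]
    have hαt : α t = (a : G)⁻¹ := by
      have := h1
      rw [hst, map_mul, hα] at this
      exact eq_inv_of_mul_eq_one_right this
    have hxa : ρ (a : G) (xg O a) = xg O a := by
      rw [hρ]
      congr 1
      exact Subtype.ext (by simp)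
    have hxainv : ρ (a : G)⁻¹ (xg O a) = xg O a := by
      rw [hρ]
      congr 1
      exact Subtype.ext (by simp)
    have hρs : ρ (a : G) (mk w) = xg O a * ρ (a : G) t := by
      rw [hst, map_mul, hxa]
    have hcomm : ρ (a : G) t * xg O a = xg O a * ρ (a : G) t := by
      rw [comm (ρ (a : G) t) (xg O a), alphaconj, hαt]
      rw [show (a : G) * (a : G)⁻¹ * (a : G)⁻¹ = (a : G)⁻¹ by group, hxainv]
    have hs2 : mk w = ρ (a : G) t * xg O a := by
      rw [hst, comm (xg O a) t, hα]
    rw [hρs, ← hcomm, ← hs2]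
  -- conclude using that the factors generate G
  intro g
  let H : Subgroup G :=
    { carrier := {g : G | ρ g (mk w) = mk w}
      one_mem' := by simp
      mul_mem' := by
        intro x y hx hy
        simp only [Set.mem_setOf_eq] at *
        rw [map_mul, MulAut.mul_apply, hy, hx]
      inv_mem' := by
        intro x hx
        simp only [Set.mem_setOf_eq] at *
        calc ρ x⁻¹ (mk w) = ρ x⁻¹ (ρ x (mk w)) := by rw [hx]
        _ = mk w := by
            rw [← MulAut.mul_apply, ← map_mul, inv_mul_cancel, map_one,
              MulAut.one_apply] }
  have : Subgroup.closure {g : G | ∃ a ∈ FreeMonoid.toList w, (a : G) = g} ≤ H := by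
    rw [Subgroup.closure_le]
    rintro g ⟨a, ha, rfl⟩
    exact key a ha
  exact this (by rw [hgen]; trivial)
end

section
/- Let C be a conjugacy class in S_d consisting of odd permutations. In the factorization semigroup S(S_d, C), the element c = s̄_{(1,2)}² · s̄_{(2,3)}² · … · s̄_{(d-1,d)}², where each s̄_{(i,i+1)} ∈ S(S_d,C) satisfies α(s̄_{(i,i+1)}) = (i,i+1), has α(c) = 1 and is fixed by the conjugation action ρ(σ) for every σ ∈ S_d. -/
section Aux
variable {G : Type*} [Group G] {O : Set G} (hO : ConjInvariant O)
variable (ρ : G →* MulAut (FactorSgp O))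
variable (hρ : ∀ (g : G) (a : O), ρ g (xg O a) = xg O ⟨g * a * g⁻¹, hO g a a.2⟩)

lemma xg_surj (s : FactorSgp O) : ∃ l : List O, s = (l.map (xg O)).prod := by
  induction s using Con.induction_on with
  | H w =>
    induction w using FreeMonoid.inductionOn' with
    | one => exact ⟨[], rfl⟩
    | of_mul g w ih =>
      obtain ⟨l, hl⟩ := ih
      refine ⟨g :: l, ?_⟩
      have : ((FreeMonoid.of g * w : FreeMonoid O) : FactorSgp O)
          = xg O g * (w : FactorSgp O) := rfl
      rw [this, hl]
      simp [xg]

include hρ in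
lemma xg_rel (g h : O) :
    xg O g * xg O h = ρ (g : G) (xg O h) * xg O g := by
  have key : xg O g * xg O h = xg O ⟨(g : G) * h * (g : G)⁻¹, hO g h h.2⟩ * xg O g := by
    simp only [xg, ← map_mul]
    exact Con.eq _ |>.2 (ConGen.Rel.of _ _ ⟨g, h, hO g h h.2, rfl, rfl⟩)
  rw [key, hρ]

include hρ in
lemma xg_mul_comm (g : O) (b : FactorSgp O) :
    xg O g * b = ρ (g : G) b * xg O g := by
  obtain ⟨l, rfl⟩ := xg_surj b
  induction l with
  | nil => simp
  | cons h l ih =>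
    simp only [List.map_cons, List.prod_cons, ← mul_assoc]
    rw [xg_rel hO ρ hρ, mul_assoc, ih, ← mul_assoc, ← map_mul]

variable (α : FactorSgp O →* G) (hα : ∀ g : O, α (xg O g) = g)

include hρ hα in
lemma mul_eq_rho_mul (a b : FactorSgp O) : a * b = ρ (α a) b * a := by
  obtain ⟨l, rfl⟩ := xg_surj a
  induction l generalizing b with
  | nil => simp
  | cons g l ih =>
    set p : FactorSgp O := (l.map (xg O)).prod with hp
    simp only [List.map_cons, List.prod_cons, ← hp]
    have hsplit : α (xg O g * p) = (g : G) * α p := by rw [map_mul, hα]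
    rw [hsplit, map_mul, MulAut.mul_apply, mul_assoc, ih b, ← mul_assoc,
      xg_mul_comm hO ρ hρ g (ρ (α p) b), mul_assoc]

include hρ hα in
lemma rho_alpha_fix (s : FactorSgp O) : ρ (α s) s = s := by
  obtain ⟨l, rfl⟩ := xg_surj s
  induction l with
  | nil => simp
  | cons g l ih =>
    set p : FactorSgp O := (l.map (xg O)).prod with hp
    simp only [List.map_cons, List.prod_cons, ← hp]
    have h1 : xg O g * p = p * ρ ((α p)⁻¹) (xg O g) := by
      rw [mul_eq_rho_mul hO ρ hρ α hα p (ρ ((α p)⁻¹) (xg O g)),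
        ← MulAut.mul_apply, ← map_mul, mul_inv_cancel, map_one, MulAut.one_apply]
    have hg : ρ (g : G) (xg O g) = xg O g := by
      rw [hρ]
      congr 1
      exact Subtype.ext (by group)
    have h2 : p * xg O g = xg O g * ρ ((g : G)⁻¹) p := by
      rw [mul_eq_rho_mul hO ρ hρ α hα (xg O g) (ρ ((g : G)⁻¹) p), hα,
        ← MulAut.mul_apply, ← map_mul, mul_inv_cancel, map_one, MulAut.one_apply]
    have hsplit : α (xg O g * p) = (g : G) * α p := by rw [map_mul, hα]
    have hcancel : ∀ (x : G) (b : FactorSgp O), ρ x (ρ x⁻¹ b) = b := by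
      intro x b
      rw [← MulAut.mul_apply, ← map_mul, mul_inv_cancel, map_one, MulAut.one_apply]
    calc ρ (α (xg O g * p)) (xg O g * p)
        = ρ (g : G) (ρ (α p) (p * ρ ((α p)⁻¹) (xg O g))) := by
          rw [hsplit, map_mul ρ, MulAut.mul_apply, h1]
      _ = ρ (g : G) (p * xg O g) := by
          rw [map_mul (ρ (α p)), ih, hcancel]
      _ = xg O g * p := by
          rw [h2, map_mul (ρ (g : G)), hg, hcancel]

include hρ hα in
lemma central_of_alpha_one (b : FactorSgp O) (hb : α b = 1) (a : FactorSgp O) :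
    a * b = b * a := by
  rw [mul_eq_rho_mul hO ρ hρ α hα b a, hb, map_one, MulAut.one_apply]

end Aux

/-- For a conjugacy class `C` of an odd permutation, the element
`c = s̄₍₁,₂₎² · s̄₍₂,₃₎² ⋯ s̄₍d₋₁,d₎²` with `α(s̄₍i,i+1₎) = (i,i+1)` satisfies
`α(c) = 1` and is fixed by the conjugation action of all of `S_d`. -/
theorem central_element_fixed (d : ℕ) (hd : 2 ≤ d) (σ₀ : Equiv.Perm (Fin d))
    (hσ₀ : Equiv.Perm.sign σ₀ = -1)
    (C : Set (Equiv.Perm (Fin d))) (hC : C = {τ | IsConj σ₀ τ})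
    (hCinv : ConjInvariant C)
    (α : FactorSgp C →* Equiv.Perm (Fin d)) (hα : ∀ g : C, α (xg C g) = g)
    (ρ : Equiv.Perm (Fin d) →* MulAut (FactorSgp C))
    (hρ : ∀ (g : Equiv.Perm (Fin d)) (a : C),
      ρ g (xg C a) = xg C ⟨g * a * g⁻¹, hCinv g a a.2⟩)
    (sb : Fin (d - 1) → FactorSgp C)
    (hsb : ∀ i : Fin (d - 1),
      α (sb i) = Equiv.swap ⟨i.1, by omega⟩ ⟨i.1 + 1, by omega⟩)
    (c : FactorSgp C) (hc : c = (List.ofFn fun i : Fin (d - 1) => (sb i) ^ 2).prod) :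
    α c = 1 ∧ ∀ τ : Equiv.Perm (Fin d), ρ τ c = c := by
  obtain ⟨n, rfl⟩ : ∃ n, d = n + 1 := ⟨d - 1, by omega⟩
  set L : List (FactorSgp C) := List.ofFn (fun i : Fin (n + 1 - 1) => sb i ^ 2) with hL
  have h1 : ∀ i : Fin (n + 1 - 1), α (sb i ^ 2) = 1 := by
    intro i
    rw [map_pow, hsb i, sq, Equiv.swap_mul_self]
  have hα1 : α c = 1 := by
    rw [hc, map_list_prod, List.map_ofFn]
    apply List.prod_eq_one
    intro x hx
    rw [List.mem_ofFn] at hx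
    obtain ⟨i, rfl⟩ := hx
    exact h1 i
  refine ⟨hα1, ?_⟩
  -- fixed under adjacent transpositions
  have hfix : ∀ j : Fin (n + 1 - 1),
      ρ (Equiv.swap (⟨j.1, by omega⟩ : Fin (n + 1)) ⟨j.1 + 1, by omega⟩) c = c := by
    intro j
    have hjlen : (j : ℕ) < L.length := by simp only [hL, List.length_ofFn]; exact j.2
    have hsplit : c = (L.take j).prod * (L.drop j).prod := by
      rw [hc, ← List.prod_append, List.take_append_drop]
    have hdrop : L.drop j = (sb j ^ 2) :: L.drop (j + 1) := by
      rw [List.drop_eq_getElem_cons hjlen]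
      congr 1
      simp [hL]
    set r : FactorSgp C := (L.take j).prod * (L.drop (j + 1)).prod with hr
    have hcform : c = sb j * (sb j * r) := by
      rw [hsplit, hdrop, List.prod_cons, ← mul_assoc,
        central_of_alpha_one hCinv ρ hρ α hα (sb j ^ 2) (h1 j) ((L.take j).prod),
        mul_assoc, sq, mul_assoc, hr]
    have hαr : α r = 1 := by
      have key : α (sb j) * (α (sb j) * α r) = 1 := by
        rw [← map_mul, ← map_mul, ← hcform, hα1]
      rwa [← mul_assoc, hsb j, Equiv.swap_mul_self, one_mul] at key
    have e1 : ρ (Equiv.swap (⟨j.1, by omega⟩ : Fin (n + 1)) ⟨j.1 + 1, by omega⟩) (sb j)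
        = sb j := by
      have := rho_alpha_fix hCinv ρ hρ α hα (sb j)
      rwa [hsb j] at this
    have e2 : ρ (Equiv.swap (⟨j.1, by omega⟩ : Fin (n + 1)) ⟨j.1 + 1, by omega⟩) (sb j * r)
        = sb j * r := by
      have := rho_alpha_fix hCinv ρ hρ α hα (sb j * r)
      rwa [map_mul α, hαr, mul_one, hsb j] at this
    conv_lhs => rw [hcform]
    rw [map_mul, e1, e2, ← hcform]
  -- generation by adjacent transpositions
  intro τ
  have hτ : τ ∈ Submonoid.closure
      (Set.range fun i : Fin n => Equiv.swap i.castSucc i.succ) := by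
    rw [Equiv.Perm.mclosure_swap_castSucc_succ]
    trivial
  refine Submonoid.closure_induction ?_ ?_ ?_ hτ
  · rintro x ⟨i, rfl⟩
    exact hfix i
  · simp
  · intro x y _ _ px py
    rw [map_mul, MulAut.mul_apply, py, px]
end

section
/- Let C be the conjugacy class of an odd permutation σ ∈ S_d with at least 2 fixed points (f_C ≥ 2). Then the transposition (1,2) can be written as a product of elements of C all of which fix both 3 and 4. -/
open Equiv Equiv.Perm Subgroup

section Aux


variable {β : Type*} [Fintype β] [DecidableEq β]

private lemma top_of_swap_mem (N : Subgroup (Perm β)) (hN : N.Normal)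
    {t : Perm β} (ht : t.IsSwap) (htN : t ∈ N) : N = ⊤ := by
  rw [eq_top_iff, ← Equiv.Perm.closure_isSwap, Subgroup.closure_le]
  rintro u ⟨x, y, hxy, rfl⟩
  obtain ⟨a, b, hab, rfl⟩ := ht
  obtain ⟨c, hc⟩ := isConj_iff.mp (Equiv.Perm.isConj_swap hab hxy)
  exact hc ▸ hN.conj_mem _ htN c

private lemma top_of_threeCycle_mem (N : Subgroup (Perm β)) (hN : N.Normal)
    {h : Perm β} (hh : h.IsThreeCycle) (hhN : h ∈ N)
    {g : Perm β} (hg : g ∈ N) (hsg : Equiv.Perm.sign g = -1) : N = ⊤ := by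
  have hA : alternatingGroup β ≤ N := by
    rw [← Equiv.Perm.closure_three_cycles_eq_alternating, Subgroup.closure_le]
    intro u hu
    obtain ⟨c, hc⟩ := isConj_iff.mp
      (Equiv.Perm.isConj_iff_cycleType_eq.mpr (hh.cycleType.trans hu.cycleType.symm))
    exact hc ▸ hN.conj_mem _ hhN c
  rw [eq_top_iff']
  intro σ
  rcases Int.units_eq_one_or (Equiv.Perm.sign σ) with h1 | h1
  · exact hA (Equiv.Perm.mem_alternatingGroup.mpr h1)
  · have h2 : σ * g⁻¹ ∈ alternatingGroup β := by
      rw [Equiv.Perm.mem_alternatingGroup, map_mul, map_inv, h1, hsg]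
      decide
    simpa using mul_mem (hA h2) hg


private lemma normal_top (N : Subgroup (Perm β)) (hN : N.Normal)
    {g : Perm β} (hg : g ∈ N) (hsg : Equiv.Perm.sign g = -1) : N = ⊤ := by
  have hg1 : g ≠ 1 := by rintro rfl; simp at hsg
  obtain ⟨a, ha⟩ : ∃ a, g a ≠ a := by
    by_contra h
    push_neg at h
    exact hg1 (Equiv.ext h)
  set b := g a with hb
  have hab : a ≠ b := fun h => ha h.symm
  have key : ∀ x y : β, swap x y * swap (g x) (g y) ∈ N := by
    intro x y
    have h1 : swap x y * g * (swap x y)⁻¹ * g⁻¹ ∈ N :=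
      mul_mem (hN.conj_mem g hg _) (inv_mem hg)
    have h2 : swap x y * g * (swap x y)⁻¹ * g⁻¹ = swap x y * swap (g x) (g y) := by
      rw [swap_apply_apply g x y, Equiv.swap_inv]
      group
    rwa [h2] at h1
  by_cases hba : g b = a
  · by_cases hswap : ∀ x, x ≠ a → x ≠ b → g x = x
    · have hgs : g = swap a b := by
        ext x
        by_cases hxa : x = a
        · subst hxa; rw [swap_apply_left, ← hb]
        · by_cases hxb : x = b
          · subst hxb; rw [swap_apply_right, hba]
          · rw [hswap x hxa hxb, swap_apply_of_ne_of_ne hxa hxb]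
      exact top_of_swap_mem N hN ⟨a, b, hab, hgs⟩ (hgs ▸ hg)
    · push_neg at hswap
      obtain ⟨x₀, hx₀a, hx₀b, hx₀⟩ := hswap
      set y := g x₀ with hy
      have hyx₀ : y ≠ x₀ := hx₀
      have hya : y ≠ a := fun h => hx₀b (g.injective (h.trans hba.symm))
      have hyb : y ≠ b := fun h => hx₀a (g.injective (h.trans hb))
      have hv : swap a x₀ * swap b y ∈ N := by
        have := key a x₀
        rwa [← hb, ← hy] at this
      by_cases he : ∃ e, e ≠ a ∧ e ≠ b ∧ e ≠ x₀ ∧ e ≠ y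
      · obtain ⟨e, hea, heb, hex₀, hey⟩ := he
        have hv' : swap a x₀ * swap b e ∈ N := by
          have h2 := hN.conj_mem _ hv (swap y e)
          have h3 : swap y e * (swap a x₀ * swap b y) * (swap y e)⁻¹
              = swap a x₀ * swap b e := by
            have e1 : swap ((swap y e) a) ((swap y e) x₀) = swap a x₀ := by
              rw [swap_apply_of_ne_of_ne (Ne.symm hya) (Ne.symm hea),
                swap_apply_of_ne_of_ne (Ne.symm hyx₀) (Ne.symm hex₀)]
            have e2 : swap ((swap y e) b) ((swap y e) y) = swap b e := by
              rw [swap_apply_of_ne_of_ne (Ne.symm hyb) (Ne.symm heb), swap_apply_left]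
            calc swap y e * (swap a x₀ * swap b y) * (swap y e)⁻¹
                = (swap y e * swap a x₀ * (swap y e)⁻¹) *
                  (swap y e * swap b y * (swap y e)⁻¹) := by group
              _ = swap a x₀ * swap b e := by
                  rw [← swap_apply_apply, ← swap_apply_apply, e1, e2]
          rwa [h3] at h2
        have hw : swap b y * swap b e ∈ N := by
          have h4 := mul_mem (inv_mem hv) hv'
          have h5 : (swap a x₀ * swap b y)⁻¹ * (swap a x₀ * swap b e)
              = swap b y * swap b e := by
            rw [mul_inv_rev, Equiv.swap_inv, Equiv.swap_inv, mul_assoc,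
              ← mul_assoc (swap a x₀), Equiv.swap_mul_self, one_mul]
          rwa [h5] at h4
        exact top_of_threeCycle_mem N hN
          (isThreeCycle_swap_mul_swap_same (Ne.symm hyb) (Ne.symm heb) (Ne.symm hey)) hw hg hsg
      · push_neg at he
        have hgy : g y = x₀ := by
          have h1 : g y ≠ b := fun h => hya (g.injective (h.trans hb))
          have h2 : g y ≠ a := fun h => hyb (g.injective (h.trans hba.symm))
          have h3 : g y ≠ y := fun h => hyx₀ (g.injective (h.trans hy))
          by_contra hgyx
          exact h3 (he (g y) h2 h1 hgyx)
        have hgeq : g = swap a b * swap x₀ y := by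
          ext z
          by_cases hza : z = a
          · subst hza
            rw [Perm.mul_apply, swap_apply_of_ne_of_ne (Ne.symm hx₀a) (Ne.symm hya),
              swap_apply_left, hb]
          by_cases hzb : z = b
          · subst hzb
            rw [Perm.mul_apply, swap_apply_of_ne_of_ne (Ne.symm hx₀b) (Ne.symm hyb),
              swap_apply_right, hba]
          by_cases hzx : z = x₀
          · subst hzx
            rw [Perm.mul_apply, swap_apply_left, swap_apply_of_ne_of_ne hya hyb, ← hy]
          by_cases hzy : z = y
          · subst hzy
            rw [Perm.mul_apply, swap_apply_right, swap_apply_of_ne_of_ne hx₀a hx₀b, hgy]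
          · exact absurd (he z hza hzb hzx) hzy
        rw [hgeq, map_mul, sign_swap hab, sign_swap (Ne.symm hyx₀)] at hsg
        exact absurd hsg (by decide)
  · have hcb : g b ≠ b := fun h => hab (g.injective (hb ▸ h)).symm
    have hw : swap a b * swap b (g b) ∈ N := by
      have := key a b
      rwa [← hb] at this
    have h3 : IsThreeCycle (swap a b * swap b (g b)) := by
      rw [Equiv.swap_comm a b]
      exact isThreeCycle_swap_mul_swap_same (Ne.symm hab) (Ne.symm hcb) (Ne.symm hba)
    exact top_of_threeCycle_mem N hN h3 hw hg hsg

end Aux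


private lemma mem_mclosure_of_mem_closure {G : Type*} [Group G] [Finite G] {S : Set G} {x : G}
    (hx : x ∈ Subgroup.closure S) : x ∈ Submonoid.closure S := by
  refine Subgroup.closure_induction (fun y hy => Submonoid.subset_closure hy)
    (Submonoid.one_mem _) (fun y z _ _ hy hz => mul_mem hy hz) (fun y _ hy => ?_) hx
  have hpos : 0 < orderOf y := orderOf_pos y
  have h1 : y ^ (orderOf y - 1) * y = 1 := by
    rw [← pow_succ, Nat.sub_add_cancel hpos, pow_orderOf_eq_one]
  rw [inv_eq_of_mul_eq_one_left h1]
  exact pow_mem hy _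

set_option maxHeartbeats 1000000 in
theorem swap_product_of_class_fixing (d : ℕ) (hd : 4 ≤ d) (σ : Equiv.Perm (Fin d))
    (hσ : Equiv.Perm.sign σ = -1)
    (hfix : 2 ≤ (Finset.univ.filter fun x : Fin d => σ x = x).card) :
    Equiv.swap (⟨0, by omega⟩ : Fin d) ⟨1, by omega⟩ ∈
      Submonoid.closure
        {τ : Equiv.Perm (Fin d) | IsConj σ τ ∧
          τ ⟨2, by omega⟩ = ⟨2, by omega⟩ ∧ τ ⟨3, by omega⟩ = ⟨3, by omega⟩} := by
  classical
  obtain ⟨p, hp, q, hq, hpq⟩ := Finset.one_lt_card.mp hfix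
  have hpfix : σ p = p := (Finset.mem_filter.mp hp).2
  have hqfix : σ q = q := (Finset.mem_filter.mp hq).2
  set p2 : Fin d := ⟨2, by omega⟩ with hp2
  set p3 : Fin d := ⟨3, by omega⟩ with hp3
  have h23 : p2 ≠ p3 := by simp [hp2, hp3, Fin.ext_iff]
  set c : Equiv.Perm (Fin d) := swap (swap p p2 q) p3 * swap p p2 with hc
  have hq2 : swap p p2 q ≠ p2 := by
    intro h
    have := (swap p p2).injective (h.trans (Equiv.swap_apply_left p p2).symm)
    exact hpq this.symm
  have hcp : c p = p2 := by
    rw [hc, Perm.mul_apply, Equiv.swap_apply_left]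
    exact Equiv.swap_apply_of_ne_of_ne (Ne.symm hq2) h23
  have hcq : c q = p3 := by
    rw [hc, Perm.mul_apply]
    exact Equiv.swap_apply_left _ _
  set τ : Equiv.Perm (Fin d) := c * σ * c⁻¹ with hτ
  have hcip : c⁻¹ p2 = p := by rw [← hcp]; exact c.symm_apply_apply p
  have hciq : c⁻¹ p3 = q := by rw [← hcq]; exact c.symm_apply_apply q
  have hτ2 : τ p2 = p2 := by rw [hτ, Perm.mul_apply, Perm.mul_apply, hcip, hpfix, hcp]
  have hτ3 : τ p3 = p3 := by rw [hτ, Perm.mul_apply, Perm.mul_apply, hciq, hqfix, hcq]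
  have hsτ : Equiv.Perm.sign τ = -1 := by
    rw [hτ, map_mul, map_mul, map_inv, mul_comm (Perm.sign c) (Perm.sign σ), mul_assoc,
      mul_inv_cancel, mul_one, hσ]
  have hPiff : ∀ x : Fin d, (x ≠ p2 ∧ x ≠ p3) ↔ (τ x ≠ p2 ∧ τ x ≠ p3) := by
    intro x
    constructor
    · rintro ⟨h2, h3⟩
      exact ⟨fun h => h2 (τ.injective (h.trans hτ2.symm)),
        fun h => h3 (τ.injective (h.trans hτ3.symm))⟩
    · rintro ⟨h2, h3⟩
      refine ⟨fun h => h2 ?_, fun h => h3 ?_⟩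
      · rw [h, hτ2]
      · rw [h, hτ3]
  set τ' := τ.subtypePerm (p := fun x => x ≠ p2 ∧ x ≠ p3) (fun x => (hPiff x).symm) with hτ'
  have hmove : ∀ x : Fin d, τ x ≠ x → (x ≠ p2 ∧ x ≠ p3) := fun x hx =>
    ⟨fun h => hx (by rw [h, hτ2]), fun h => hx (by rw [h, hτ3])⟩
  have hsτ' : Equiv.Perm.sign τ' = -1 :=
    (Equiv.Perm.sign_subtypePerm τ (p := fun x => x ≠ p2 ∧ x ≠ p3) (fun x => (hPiff x).symm) hmove).trans hsτ
  have htop : Subgroup.normalClosure {τ'} = ⊤ :=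
    normal_top _ Subgroup.normalClosure_normal
      (Subgroup.subset_normalClosure (Set.mem_singleton _)) hsτ'
  set ι : {x : Fin d // x ≠ p2 ∧ x ≠ p3} ↪ Fin d := Function.Embedding.subtype _ with hι
  set Φ := Equiv.Perm.viaEmbeddingHom ι with hΦ
  have hrange : ∀ x : Fin d, ¬(x ≠ p2 ∧ x ≠ p3) → x ∉ Set.range ι := by
    rintro x hx ⟨w, rfl⟩
    exact hx w.2
  have hΦτ : Φ τ' = τ := by
    refine Equiv.ext fun x => ?_
    by_cases hx : x ≠ p2 ∧ x ≠ p3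
    · show Φ τ' x = τ x
      rw [hΦ, Equiv.Perm.viaEmbeddingHom_apply]
      exact Equiv.Perm.viaEmbedding_apply τ' ι ⟨x, hx⟩
    · rw [hΦ, Equiv.Perm.viaEmbeddingHom_apply,
        Equiv.Perm.viaEmbedding_apply_of_notMem τ' ι x (hrange x hx)]
      push_neg at hx
      by_cases h2 : x = p2
      · rw [h2]; exact hτ2.symm
      · rw [hx h2]; exact hτ3.symm
  have hΦswap : ∀ u v : {x : Fin d // x ≠ p2 ∧ x ≠ p3},
      Φ (swap u v) = swap (u : Fin d) (v : Fin d) := by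
    intro u v
    refine Equiv.ext fun x => ?_
    rw [hΦ, Equiv.Perm.viaEmbeddingHom_apply]
    by_cases hx : x ≠ p2 ∧ x ≠ p3
    · have e1 : Equiv.Perm.viaEmbedding (swap u v) ι x = ((swap u v ⟨x, hx⟩ : _) : Fin d) :=
        Equiv.Perm.viaEmbedding_apply (swap u v) ι ⟨x, hx⟩
      rw [e1]
      by_cases hxu : x = (u : Fin d)
      · have h1 : (⟨x, hx⟩ : {x : Fin d // x ≠ p2 ∧ x ≠ p3}) = u := Subtype.ext hxu
        rw [h1, Equiv.swap_apply_left, hxu, Equiv.swap_apply_left]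
      · by_cases hxv : x = (v : Fin d)
        · have h1 : (⟨x, hx⟩ : {x : Fin d // x ≠ p2 ∧ x ≠ p3}) = v := Subtype.ext hxv
          rw [h1, Equiv.swap_apply_right, hxv, Equiv.swap_apply_right]
        · have h1 : (⟨x, hx⟩ : {x : Fin d // x ≠ p2 ∧ x ≠ p3}) ≠ u :=
            fun h => hxu (congrArg Subtype.val h)
          have h2 : (⟨x, hx⟩ : {x : Fin d // x ≠ p2 ∧ x ≠ p3}) ≠ v :=
            fun h => hxv (congrArg Subtype.val h)
          rw [Equiv.swap_apply_of_ne_of_ne h1 h2, Equiv.swap_apply_of_ne_of_ne hxu hxv]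
    · rw [Equiv.Perm.viaEmbedding_apply_of_notMem _ _ x (hrange x hx)]
      have hxu : x ≠ (u : Fin d) := fun h => hx (by rw [h]; exact u.2)
      have hxv : x ≠ (v : Fin d) := fun h => hx (by rw [h]; exact v.2)
      rw [Equiv.swap_apply_of_ne_of_ne hxu hxv]
  apply mem_mclosure_of_mem_closure
  have hu0 : ((⟨0, by omega⟩ : Fin d) ≠ p2 ∧ (⟨0, by omega⟩ : Fin d) ≠ p3) :=
    ⟨by simp [hp2, Fin.ext_iff], by simp [hp3, Fin.ext_iff]⟩
  have hu1 : ((⟨1, by omega⟩ : Fin d) ≠ p2 ∧ (⟨1, by omega⟩ : Fin d) ≠ p3) :=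
    ⟨by simp [hp2, Fin.ext_iff], by simp [hp3, Fin.ext_iff]⟩
  set u0 : {x : Fin d // x ≠ p2 ∧ x ≠ p3} := ⟨⟨0, by omega⟩, hu0⟩ with hu0d
  set u1 : {x : Fin d // x ≠ p2 ∧ x ≠ p3} := ⟨⟨1, by omega⟩, hu1⟩ with hu1d
  have hkey : Φ (swap u0 u1) ∈
      Subgroup.closure {τ0 : Equiv.Perm (Fin d) | IsConj σ τ0 ∧ τ0 p2 = p2 ∧ τ0 p3 = p3} := by
    have h1 : swap u0 u1 ∈ Subgroup.normalClosure {τ'} := by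
      rw [htop]; exact Subgroup.mem_top _
    have h2 := Subgroup.mem_map_of_mem Φ h1
    have hdef : Subgroup.normalClosure {τ'} = Subgroup.closure (Group.conjugatesOfSet {τ'}) := rfl
    rw [hdef, MonoidHom.map_closure] at h2
    refine Subgroup.closure_mono ?_ h2
    rintro w ⟨x, hx, rfl⟩
    obtain ⟨t, ht, hconj⟩ := Group.mem_conjugatesOfSet_iff.mp hx
    rw [Set.mem_singleton_iff] at ht
    subst ht
    have hcj : IsConj τ (Φ x) := by
      rw [← hΦτ]; exact MonoidHom.map_isConj Φ hconj
    refine ⟨(isConj_iff.mpr ⟨c, rfl⟩).trans hcj, ?_, ?_⟩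
    · have h5 := Equiv.Perm.viaEmbedding_apply_of_notMem x ι p2 (hrange p2 (by simp))
      rwa [← Equiv.Perm.viaEmbeddingHom_apply, ← hΦ] at h5
    · have h5 := Equiv.Perm.viaEmbedding_apply_of_notMem x ι p3 (hrange p3 (by simp))
      rwa [← Equiv.Perm.viaEmbeddingHom_apply, ← hΦ] at h5
  rw [hΦswap u0 u1] at hkey
  exact hkey
end

section
/- Let C be a conjugacy class of S_d and z ∈ S(S_d, C) an element with α(z) = (1,2) that is fixed by ρ(σ) for every σ in the centralizer Z of (1,2) in S_d. Then the orbit of z under the conjugation action ρ of S_d has at most d(d-1)/2 elements, and the map sending ρ(σ)(z) to the transposition σ(1,2)σ⁻¹ is a well-defined bijection from this orbit onto the set of transpositions of S_d. -/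
/-- The orbit of an element `z` with `α(z) = (1,2)` fixed by the centralizer of
`(1,2)` has at most `d(d-1)/2` elements, and `ρ(σ)(z) ↦ σ(1,2)σ⁻¹` is a
well-defined bijection from this orbit onto the set of transpositions. -/
theorem orbit_bijects_transpositions (d : ℕ) (hd : 2 ≤ d)
    (σ₀ : Equiv.Perm (Fin d))
    (C : Set (Equiv.Perm (Fin d))) (hC : C = {τ | IsConj σ₀ τ})
    (hCinv : ConjInvariant C)
    (α : FactorSgp C →* Equiv.Perm (Fin d)) (hα : ∀ g : C, α (xg C g) = g)
    (ρ : Equiv.Perm (Fin d) →* MulAut (FactorSgp C))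
    (hρ : ∀ (g : Equiv.Perm (Fin d)) (a : C),
      ρ g (xg C a) = xg C ⟨g * a * g⁻¹, hCinv g a a.2⟩)
    (z : FactorSgp C)
    (hz1 : α z = Equiv.swap (⟨0, by omega⟩ : Fin d) ⟨1, by omega⟩)
    (hz2 : ∀ τ ∈ Subgroup.centralizer
      {Equiv.swap (⟨0, by omega⟩ : Fin d) ⟨1, by omega⟩}, ρ τ z = z) :
    Nat.card (Set.range fun τ : Equiv.Perm (Fin d) => ρ τ z) ≤ d * (d - 1) / 2 ∧
    ∃ f : (Set.range fun τ : Equiv.Perm (Fin d) => ρ τ z) ≃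
        {g : Equiv.Perm (Fin d) // g.IsSwap},
      ∀ τ : Equiv.Perm (Fin d),
        (f ⟨ρ τ z, τ, rfl⟩ : Equiv.Perm (Fin d)) =
          τ * Equiv.swap (⟨0, by omega⟩ : Fin d) ⟨1, by omega⟩ * τ⁻¹ := by
  classical
  have h0 : (0 : ℕ) < d := by omega
  have h1 : (1 : ℕ) < d := by omega
  set i0 : Fin d := ⟨0, h0⟩ with hi0
  set i1 : Fin d := ⟨1, h1⟩ with hi1
  set s : Equiv.Perm (Fin d) := Equiv.swap i0 i1 with hs
  have hne : i0 ≠ i1 := by simp [hi0, hi1, Fin.ext_iff]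
  have hz1' : α z = s := hz1
  -- key: α intertwines ρ with conjugation
  have key : ∀ (τ : Equiv.Perm (Fin d)) (y : FactorSgp C),
      α (ρ τ y) = τ * α y * τ⁻¹ := by
    intro τ y
    obtain ⟨w, rfl⟩ := Con.mk'_surjective (c := factorCon C) y
    have heq : (α.comp (ρ τ).toMonoidHom).comp (factorCon C).mk'
        = ((MulAut.conj τ).toMonoidHom.comp α).comp (factorCon C).mk' := by
      apply FreeMonoid.hom_eq
      intro g
      show α (ρ τ (xg C g)) = MulAut.conj τ (α (xg C g))
      rw [hρ, hα, hα, MulAut.conj_apply]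
    exact DFunLike.congr_fun heq w
  have hρz : ∀ τ : Equiv.Perm (Fin d), α (ρ τ z) = Equiv.swap (τ i0) (τ i1) := by
    intro τ
    rw [key, hz1', hs, Equiv.swap_apply_apply]
  -- the bijection onto transpositions
  have hFmem : ∀ y : (Set.range fun τ : Equiv.Perm (Fin d) => ρ τ z),
      (α y).IsSwap := by
    rintro ⟨y, τ, rfl⟩
    exact ⟨τ i0, τ i1, fun h => hne (τ.injective h), hρz τ⟩
  set F : (Set.range fun τ : Equiv.Perm (Fin d) => ρ τ z) →
      {g : Equiv.Perm (Fin d) // g.IsSwap} := fun y => ⟨α y, hFmem y⟩ with hF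
  have hFinj : Function.Injective F := by
    rintro ⟨y, τ, rfl⟩ ⟨y', τ', rfl⟩ h
    have hαα : Equiv.swap (τ i0) (τ i1) = Equiv.swap (τ' i0) (τ' i1) := by
      have := congrArg Subtype.val h
      simpa [hF, hρz] using this
    have hconj : (τ'⁻¹ * τ) * s * (τ'⁻¹ * τ)⁻¹ = s := by
      have h2 : τ * s * τ⁻¹ = τ' * s * τ'⁻¹ := by
        rw [hs, ← Equiv.swap_apply_apply, ← Equiv.swap_apply_apply, hαα]
      calc (τ'⁻¹ * τ) * s * (τ'⁻¹ * τ)⁻¹ = τ'⁻¹ * (τ * s * τ⁻¹) * τ' := by group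
        _ = τ'⁻¹ * (τ' * s * τ'⁻¹) * τ' := by rw [h2]
        _ = s := by group
    have hcen : τ'⁻¹ * τ ∈ Subgroup.centralizer {s} := by
      rw [Subgroup.mem_centralizer_iff]
      rintro g hg
      rw [Set.mem_singleton_iff] at hg
      rw [hg]
      calc s * (τ'⁻¹ * τ) = ((τ'⁻¹ * τ) * s * (τ'⁻¹ * τ)⁻¹) * (τ'⁻¹ * τ) := by
            rw [hconj]
        _ = (τ'⁻¹ * τ) * s := by group
    have hfix : ρ (τ'⁻¹ * τ) z = z := hz2 _ hcen
    have : ρ τ z = ρ τ' z := by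
      have := congrArg (fun x => ρ τ' x) hfix
      simpa [map_mul] using this
    exact Subtype.ext this
  have hFsurj : Function.Surjective F := by
    rintro ⟨g, a, b, hab, rfl⟩
    set c : Equiv.Perm (Fin d) := Equiv.swap i0 a with hc
    set τ : Equiv.Perm (Fin d) := c * Equiv.swap i1 (c⁻¹ b) with hτ
    have hca : c i0 = a := Equiv.swap_apply_left _ _
    have hcb : c (c⁻¹ b) = b := c.apply_symm_apply b
    have hb0 : c⁻¹ b ≠ i0 := by
      intro h
      apply hab
      rw [← hca, ← h, hcb]
    have hτ0 : τ i0 = a := by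
      rw [hτ]
      simp only [Equiv.Perm.mul_apply]
      rw [Equiv.swap_apply_of_ne_of_ne hne (Ne.symm hb0), hca]
    have hτ1 : τ i1 = b := by
      rw [hτ]
      simp only [Equiv.Perm.mul_apply]
      rw [Equiv.swap_apply_left, hcb]
    refine ⟨⟨ρ τ z, τ, rfl⟩, ?_⟩
    apply Subtype.ext
    show α (ρ τ z) = Equiv.swap a b
    rw [hρz, hτ0, hτ1]
  set f : (Set.range fun τ : Equiv.Perm (Fin d) => ρ τ z) ≃
      {g : Equiv.Perm (Fin d) // g.IsSwap} := Equiv.ofBijective F ⟨hFinj, hFsurj⟩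
  -- counting transpositions
  have hcard : Nat.card {g : Equiv.Perm (Fin d) // g.IsSwap} ≤ d * (d - 1) / 2 := by
    set G : {x : Sym2 (Fin d) // ¬x.IsDiag} → {g : Equiv.Perm (Fin d) // g.IsSwap} :=
      fun x => ⟨Sym2.lift ⟨fun a b => Equiv.swap a b, Equiv.swap_comm⟩ x.1, by
        obtain ⟨x, hx⟩ := x
        induction x using Sym2.ind with
        | _ a b =>
          rw [Sym2.mk_isDiag_iff] at hx
          exact ⟨a, b, hx, by simp⟩⟩ with hG
    have hGsurj : Function.Surjective G := by
      rintro ⟨g, a, b, hab, rfl⟩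
      exact ⟨⟨s(a, b), by rw [Sym2.mk_isDiag_iff]; exact hab⟩,
        Subtype.ext (by simp [hG])⟩
    calc Nat.card {g : Equiv.Perm (Fin d) // g.IsSwap}
        ≤ Nat.card {x : Sym2 (Fin d) // ¬x.IsDiag} :=
          Nat.card_le_card_of_surjective G hGsurj
      _ = (Fintype.card (Fin d)).choose 2 := by
          rw [Nat.card_eq_fintype_card, Sym2.card_subtype_not_diag]
      _ = d * (d - 1) / 2 := by rw [Fintype.card_fin, Nat.choose_two_right]
  constructor
  · calc Nat.card (Set.range fun τ : Equiv.Perm (Fin d) => ρ τ z)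
        = Nat.card {g : Equiv.Perm (Fin d) // g.IsSwap} := Nat.card_congr f
      _ ≤ d * (d - 1) / 2 := hcard
  · refine ⟨f, fun τ => ?_⟩
    show (F ⟨ρ τ z, τ, rfl⟩ : Equiv.Perm (Fin d)) = τ * s * τ⁻¹
    show α (ρ τ z) = τ * s * τ⁻¹
    rw [key, hz1']
end
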